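/- Fix 0 < s < 1 and for B > 0 define I(B) = ∫_0^1 ( (4/(1+s)²)(1-k²) + B^{-1-s}·(2/(1-s))·(1-k^{1-s}) )^{-1/2} dk. Then I is continuous on (0,∞), lim_{B→0⁺} I(B) = 0, and lim_{B→∞} I(B) = (1+s)π/4. -/
import Mathlib

open Real MeasureTheory Set Filter

lemma aux_integrableOn : IntegrableOn (fun x : ℝ => ((1:ℝ) - x ^ 2) ^ (-(1:ℝ)/2)) (Set.Ioo 0 1) := by
  have h0 : IntervalIntegrable (fun x : ℝ => x ^ (-(1:ℝ)/2)) volume 0 1 :=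
    intervalIntegral.intervalIntegrable_rpow' (by norm_num)
  have h1 : IntervalIntegrable (fun x : ℝ => ((1:ℝ) - x) ^ (-(1:ℝ)/2)) volume 0 1 := by
    have := (h0.comp_sub_left 1).symm
    simpa using this
  have hg : IntegrableOn (fun x : ℝ => ((1:ℝ) - x) ^ (-(1:ℝ)/2)) (Set.Ioo 0 1) := by
    have := (intervalIntegrable_iff_integrableOn_Ioo_of_le (by norm_num : (0:ℝ) ≤ 1)).mp h1
    exact this
  have hmeas : Measurable fun x : ℝ => ((1:ℝ) - x ^ 2) ^ (-(1:ℝ)/2) :=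
    (measurable_const.sub (measurable_id.pow_const 2)).pow_const _
  refine hg.mono' hmeas.aestronglyMeasurable ?_
  rw [ae_restrict_iff' measurableSet_Ioo]
  filter_upwards with x hx
  have hx1 : 0 < 1 - x := by linarith [hx.2]
  have hx2 : 1 - x ≤ 1 - x ^ 2 := by nlinarith [hx.1.le, hx.2.le]
  rw [Real.norm_of_nonneg (Real.rpow_nonneg (by nlinarith) _)]
  exact Real.rpow_le_rpow_of_nonpos hx1 hx2 (by norm_num)

lemma aux_integral : ∫ x in Set.Ioo (0:ℝ) 1, ((1:ℝ) - x ^ 2) ^ (-(1:ℝ)/2) = π / 2 := by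
  have hint : IntervalIntegrable (fun x : ℝ => ((1:ℝ) - x ^ 2) ^ (-(1:ℝ)/2)) volume 0 1 := by
    rw [intervalIntegrable_iff_integrableOn_Ioo_of_le (by norm_num : (0:ℝ) ≤ 1)]
    exact aux_integrableOn
  have key : ∫ x in (0:ℝ)..1, ((1:ℝ) - x ^ 2) ^ (-(1:ℝ)/2) = arcsin 1 - arcsin 0 := by
    apply intervalIntegral.integral_eq_sub_of_hasDeriv_right_of_le (by norm_num)
      Real.continuous_arcsin.continuousOn _ hint
    intro x hx
    have h1 : x ≠ -1 := by intro h; rw [h] at hx; exact absurd hx.1 (by norm_num)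
    have h2 : x ≠ 1 := ne_of_lt hx.2
    have := Real.hasDerivAt_arcsin h1 h2
    have heq : (1:ℝ) / Real.sqrt (1 - x ^ 2) = ((1:ℝ) - x ^ 2) ^ (-(1:ℝ)/2) := by
      rw [neg_div, Real.rpow_neg (by nlinarith [hx.1, hx.2] : (0:ℝ) ≤ 1 - x ^ 2),
        Real.sqrt_eq_rpow, one_div]
    rw [← heq]
    exact this.hasDerivWithinAt
  have := key
  rw [intervalIntegral.integral_of_le (by norm_num : (0:ℝ) ≤ 1),
    MeasureTheory.integral_Ioc_eq_integral_Ioo] at this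
  rw [this, Real.arcsin_one, Real.arcsin_zero]
  ring

theorem shooting_integral_properties (s : ℝ) (hs : 0 < s) (hs1 : s < 1) :
    ContinuousOn
      (fun B : ℝ => ∫ k in Set.Ioo (0 : ℝ) 1,
        ((4 / (1 + s) ^ 2) * (1 - k ^ 2)
          + B ^ (-1 - s) * (2 / (1 - s)) * (1 - k ^ (1 - s))) ^ (-(1 : ℝ) / 2))
      (Set.Ioi 0) ∧
    Filter.Tendsto
      (fun B : ℝ => ∫ k in Set.Ioo (0 : ℝ) 1,
        ((4 / (1 + s) ^ 2) * (1 - k ^ 2)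
          + B ^ (-1 - s) * (2 / (1 - s)) * (1 - k ^ (1 - s))) ^ (-(1 : ℝ) / 2))
      (nhdsWithin 0 (Set.Ioi 0)) (nhds 0) ∧
    Filter.Tendsto
      (fun B : ℝ => ∫ k in Set.Ioo (0 : ℝ) 1,
        ((4 / (1 + s) ^ 2) * (1 - k ^ 2)
          + B ^ (-1 - s) * (2 / (1 - s)) * (1 - k ^ (1 - s))) ^ (-(1 : ℝ) / 2))
      Filter.atTop (nhds ((1 + s) * π / 4)) := by
  have hs1' : (0:ℝ) < 1 - s := by linarith
  have h1s : (0:ℝ) < 1 + s := by linarith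
  have ha : (0:ℝ) < 4 / (1 + s) ^ 2 := by positivity
  have hc : (0:ℝ) < 2 / (1 - s) := by positivity
  set a : ℝ := 4 / (1 + s) ^ 2 with ha_def
  set c : ℝ := 2 / (1 - s) with hc_def
  set F : ℝ → ℝ → ℝ := fun B k =>
    (a * (1 - k ^ 2) + B ^ (-1 - s) * c * (1 - k ^ (1 - s))) ^ (-(1 : ℝ) / 2) with hF_def
  set bound : ℝ → ℝ := fun k => a ^ (-(1:ℝ)/2) * ((1:ℝ) - k ^ 2) ^ (-(1:ℝ)/2) with hbd_def
  -- basic pointwise facts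
  have hk2 : ∀ k ∈ Set.Ioo (0:ℝ) 1, (0:ℝ) < 1 - k ^ 2 := by
    intro k hk; nlinarith [hk.1, hk.2]
  have hks : ∀ k ∈ Set.Ioo (0:ℝ) 1, (0:ℝ) < 1 - k ^ (1 - s) := by
    intro k hk
    have := Real.rpow_lt_one hk.1.le hk.2 hs1'
    linarith
  have hinner_pos : ∀ B : ℝ, 0 < B → ∀ k ∈ Set.Ioo (0:ℝ) 1,
      0 < a * (1 - k ^ 2) + B ^ (-1 - s) * c * (1 - k ^ (1 - s)) := by
    intro B hB k hk
    have h1 := mul_pos ha (hk2 k hk)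
    have h2 := mul_pos (mul_pos (Real.rpow_pos_of_pos hB (-1 - s)) hc) (hks k hk)
    linarith
  have hbound_le : ∀ B : ℝ, 0 < B → ∀ k ∈ Set.Ioo (0:ℝ) 1, ‖F B k‖ ≤ bound k := by
    intro B hB k hk
    have h1 := mul_pos ha (hk2 k hk)
    have h2 : 0 ≤ B ^ (-1 - s) * c * (1 - k ^ (1 - s)) :=
      le_of_lt (mul_pos (mul_pos (Real.rpow_pos_of_pos hB (-1 - s)) hc) (hks k hk))
    rw [Real.norm_of_nonneg (Real.rpow_nonneg (by linarith) _)]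
    calc F B k ≤ (a * (1 - k ^ 2)) ^ (-(1:ℝ)/2) :=
          Real.rpow_le_rpow_of_nonpos h1 (by linarith) (by norm_num)
      _ = bound k := by
          rw [hbd_def]; exact Real.mul_rpow ha.le (hk2 k hk).le
  have hmeas : ∀ B : ℝ, AEStronglyMeasurable (F B) (volume.restrict (Set.Ioo 0 1)) := by
    intro B
    exact (((measurable_const.mul (measurable_const.sub (measurable_id.pow_const 2))).add
      (measurable_const.mul (measurable_const.sub
        (measurable_id.pow_const (1 - s))))).pow_const _).aestronglyMeasurable
  have hbound_int : IntegrableOn bound (Set.Ioo 0 1) := aux_integrableOn.const_mul _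
  have ha_half : a ^ (-(1:ℝ)/2) = (1 + s) / 2 := by
    have h2 : (0:ℝ) ≤ 2 / (1 + s) := by positivity
    rw [ha_def, show (4:ℝ) / (1 + s) ^ 2 = (2 / (1 + s)) ^ (2:ℕ) by rw [div_pow]; norm_num,
      ← Real.rpow_natCast (2 / (1 + s)) 2, ← Real.rpow_mul h2]
    norm_num
    rw [Real.rpow_neg_one, inv_div]
  have hbound_val : ∫ k in Set.Ioo (0:ℝ) 1, bound k = (1 + s) * π / 4 := by
    rw [hbd_def]
    rw [MeasureTheory.integral_const_mul, aux_integral, ha_half]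
    ring
  refine ⟨?_, ?_, ?_⟩
  · -- continuity
    intro B₀ hB₀
    apply ContinuousAt.continuousWithinAt
    apply MeasureTheory.continuousAt_of_dominated (bound := bound)
    · exact Filter.Eventually.of_forall hmeas
    · filter_upwards [isOpen_Ioi.mem_nhds hB₀] with B hB
      rw [ae_restrict_iff' measurableSet_Ioo]
      filter_upwards with k hk
      exact hbound_le B hB k hk
    · exact hbound_int
    · rw [ae_restrict_iff' measurableSet_Ioo]
      filter_upwards with k hk
      have h1 : ContinuousAt (fun B : ℝ => B ^ (-1 - s)) B₀ :=
        Real.continuousAt_rpow_const _ _ (Or.inl (ne_of_gt hB₀))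
      have h2 : ContinuousAt (fun B : ℝ =>
          a * (1 - k ^ 2) + B ^ (-1 - s) * c * (1 - k ^ (1 - s))) B₀ :=
        continuousAt_const.add ((h1.mul continuousAt_const).mul continuousAt_const)
      exact h2.rpow_const (Or.inl (ne_of_gt (hinner_pos B₀ hB₀ k hk)))
  · -- limit at 0+
    have key : Filter.Tendsto (fun B : ℝ => ∫ k in Set.Ioo (0:ℝ) 1, F B k)
        (nhdsWithin 0 (Set.Ioi 0)) (nhds (∫ _ in Set.Ioo (0:ℝ) 1, (0:ℝ))) := by
      apply MeasureTheory.tendsto_integral_filter_of_dominated_convergence bound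
      · exact Filter.Eventually.of_forall hmeas
      · filter_upwards [self_mem_nhdsWithin] with B hB
        rw [ae_restrict_iff' measurableSet_Ioo]
        filter_upwards with k hk
        exact hbound_le B hB k hk
      · exact hbound_int
      · rw [ae_restrict_iff' measurableSet_Ioo]
        filter_upwards with k hk
        have hBinv : Tendsto (fun B : ℝ => B ^ (-1 - s)) (nhdsWithin 0 (Set.Ioi 0)) atTop := by
          have h₁ : Tendsto (fun B : ℝ => B ^ (1 + s)) (nhdsWithin 0 (Set.Ioi 0))
              (nhdsWithin 0 (Set.Ioi 0)) := by
            rw [tendsto_nhdsWithin_iff]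
            constructor
            · have hC : ContinuousAt (fun B : ℝ => B ^ (1 + s)) 0 :=
                Real.continuousAt_rpow_const _ _ (Or.inr h1s.le)
              have := hC.tendsto
              rw [Real.zero_rpow (ne_of_gt h1s)] at this
              exact this.mono_left nhdsWithin_le_nhds
            · filter_upwards [self_mem_nhdsWithin] with B hB
              exact Real.rpow_pos_of_pos hB _
          have h₂ := tendsto_inv_nhdsGT_zero.comp h₁
          apply h₂.congr'
          filter_upwards [self_mem_nhdsWithin] with B hB
          simp only [Function.comp_apply]
          rw [← Real.rpow_neg (le_of_lt hB)]
          ring_nf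
        have hinner : Tendsto (fun B : ℝ =>
            a * (1 - k ^ 2) + B ^ (-1 - s) * c * (1 - k ^ (1 - s)))
            (nhdsWithin 0 (Set.Ioi 0)) atTop := by
          apply tendsto_atTop_add_const_left
          exact (hBinv.atTop_mul_const hc).atTop_mul_const (hks k hk)
        have houter : Tendsto (fun x : ℝ => x ^ (-(1:ℝ)/2)) atTop (nhds 0) := by
          have := tendsto_rpow_neg_atTop (y := (1:ℝ)/2) (by norm_num)
          simpa [neg_div] using this
        exact houter.comp hinner
    simpa using key
  · -- limit at atTop
    have key : Filter.Tendsto (fun B : ℝ => ∫ k in Set.Ioo (0:ℝ) 1, F B k)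
        Filter.atTop (nhds (∫ k in Set.Ioo (0:ℝ) 1, bound k)) := by
      apply MeasureTheory.tendsto_integral_filter_of_dominated_convergence bound
      · exact Filter.Eventually.of_forall hmeas
      · filter_upwards [Filter.eventually_gt_atTop 0] with B hB
        rw [ae_restrict_iff' measurableSet_Ioo]
        filter_upwards with k hk
        exact hbound_le B hB k hk
      · exact hbound_int
      · rw [ae_restrict_iff' measurableSet_Ioo]
        filter_upwards with k hk
        have hB0 : Tendsto (fun B : ℝ => B ^ (-1 - s)) atTop (nhds 0) := by
          have := tendsto_rpow_neg_atTop (y := 1 + s) h1s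
          simpa [show -(1 + s) = -1 - s by ring] using this
        have hinner : Tendsto (fun B : ℝ =>
            a * (1 - k ^ 2) + B ^ (-1 - s) * c * (1 - k ^ (1 - s)))
            atTop (nhds (a * (1 - k ^ 2))) := by
          have := (tendsto_const_nhds (x := a * (1 - k ^ 2))
              (f := Filter.atTop (α := ℝ))).add
            ((hB0.mul_const c).mul_const (1 - k ^ (1 - s)))
          simpa using this
        have houter : ContinuousAt (fun x : ℝ => x ^ (-(1:ℝ)/2)) (a * (1 - k ^ 2)) :=
          Real.continuousAt_rpow_const _ _ (Or.inl (ne_of_gt (mul_pos ha (hk2 k hk))))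
        have := houter.tendsto.comp hinner
        have heq : (a * (1 - k ^ 2)) ^ (-(1:ℝ)/2) = bound k := Real.mul_rpow ha.le (hk2 k hk).le
        rw [heq] at this
        exact this
    rw [hbound_val] at key
    exact key
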